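/- The topological retract of a closed walk in a graph is unique, independent of the choice and order of one-step retraction operations. -/
import Mathlib


/-- The cyclically consecutive pairs of a list, representing the edges of a closed walk. -/
def cyclicPairs {V : Type*} (l : List V) : List (V × V) := l.zip (l.rotate 1)

/-- `l` is (the cyclic vertex sequence of) a closed walk in `G`. -/
def IsClosedWalk {V : Type*} (G : SimpleGraph V) (l : List V) : Prop :=
  l ≠ [] ∧ ∀ p ∈ cyclicPairs l, G.Adj p.1 p.2

open Classical in
/-- The number of times the closed walk `l` traverses the edge `{u, v}` (in either direction). -/
noncomputable def edgeCount {V : Type*} (l : List V) (u v : V) : ℕ :=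
  ((cyclicPairs l).filter (fun p => p = (u, v) ∨ p = (v, u))).length

/-- A combinatorial model of a connected plane graph: a connected finite simple graph together
with a distinguished outer face and a list of internal faces, each given by its boundary
closed walk, such that every edge is traversed exactly twice in total by the face boundaries. -/
structure PlanePatch (V : Type*) where
  finV : Finite V
  G : SimpleGraph V
  conn : G.Connected
  outer : List V
  inner : List (List V)
  outer_walk : IsClosedWalk G outer
  inner_walk : ∀ F ∈ inner, IsClosedWalk G F
  edge_twice : ∀ u v, G.Adj u v →
    edgeCount outer u v + (inner.map (fun F => edgeCount F u v)).sum = 2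

/-- One-step retraction of a walk: delete a retractable segment `x y x`, keeping the first `x`. -/
def WalkStep {V : Type*} (w w' : List V) : Prop :=
  ∃ l₁ x y l₂, w = l₁ ++ x :: y :: x :: l₂ ∧ w' = l₁ ++ x :: l₂

/-- A walk admits no one-step retraction. -/
def WalkReduced {V : Type*} (w : List V) : Prop := ∀ w', ¬ WalkStep w w'

/-- One-step retraction of a closed walk (given as a cyclic sequence, i.e. a list up to
rotation): delete a cyclically retractable segment `x y x`; a closed walk of length two
retracts to the empty closed walk. -/
def CycStep {V : Type*} (w w' : List V) : Prop :=
  (∃ n x y l, w.rotate n = x :: y :: x :: l ∧ w' = x :: l) ∨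
  (∃ x y, w = [x, y] ∧ w' = [])

/-- A closed walk admits no one-step retraction. -/
def CycReduced {V : Type*} (w : List V) : Prop := ∀ w', ¬ CycStep w w'

/-- A closed walk is null-homotopic if it reduces to the empty closed walk by
one-step retractions. -/
def NullHomotopic {V : Type*} (w : List V) : Prop := Relation.ReflTransGen CycStep w []

namespace Retract

variable {V : Type*}

/-- rotations of rotations reach every rotation -/
lemma rot_exists (w : List V) (n m : ℕ) : ∃ k, (w.rotate n).rotate k = w.rotate m := by
  rcases eq_or_ne w [] with rfl | hw
  · exact ⟨0, by simp⟩
  have hL : 0 < w.length := List.length_pos_iff.mpr hw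
  refine ⟨m + (w.length - n % w.length), ?_⟩
  rw [List.rotate_rotate, ← List.rotate_mod w (n + (m + (w.length - n % w.length))),
    ← List.rotate_mod w m]
  congr 1
  have h1 := Nat.div_add_mod n w.length
  have h2 : n % w.length < w.length := Nat.mod_lt _ hL
  have hm : w.length * (n / w.length + 1) = w.length * (n / w.length) + w.length := by ring
  have : n + (m + (w.length - n % w.length)) = m + w.length * (n / w.length + 1) := by omega
  rw [this, Nat.add_mul_mod_self_left]

/-- CycStep is invariant under rotating the source. -/
lemma step_rot {w a : List V} (n : ℕ) (h : CycStep (w.rotate n) a) : CycStep w a := by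
  rcases h with ⟨k, x, y, l, hk, ha⟩ | ⟨x, y, hw, ha⟩
  · exact Or.inl ⟨n + k, x, y, l, by rw [← List.rotate_rotate]; exact hk, ha⟩
  · have hlen : w.length = 2 := by
      have := congrArg List.length hw; simpa using this
    obtain ⟨p, q, rfl⟩ := List.length_eq_two.mp hlen
    exact Or.inr ⟨p, q, rfl, ha⟩

lemma step_of_isRotated {w w' a : List V} (h : w ~r w') (h' : CycStep w' a) : CycStep w a := by
  obtain ⟨n, rfl⟩ := h
  exact step_rot n h'

end Retract

namespace Retract

variable {V : Type*}

lemma diamond_aux (x y u v : V) (l k : List V) (j : ℕ) (hj : j < (x::y::x::l).length)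
    (h : (x::y::x::l).rotate j = u::v::u::k) :
    (x::l) ~r (u::k) ∨ ∃ c₁ c₂, CycStep (x::l) c₁ ∧ CycStep (u::k) c₂ ∧ c₁ ~r c₂ := by
  match j with
  | 0 =>
    rw [List.rotate_zero] at h
    simp only [List.cons.injEq] at h
    obtain ⟨h1, h2, h3, rfl⟩ := h
    subst h1; subst h2
    exact Or.inl (List.IsRotated.refl _)
  | 1 =>
    have hr : (x::y::x::l).rotate 1 = y::x::(l++[x]) := by
      simpa using List.rotate_append_length_eq [x] (y::x::l)
    rw [hr] at h
    simp only [List.cons.injEq] at h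
    obtain ⟨h1, h2, h3⟩ := h
    subst h1; subst h2
    cases l with
    | nil =>
      simp only [List.nil_append, List.cons.injEq] at h3
      obtain ⟨h4, rfl⟩ := h3
      subst h4
      exact Or.inl (List.IsRotated.refl _)
    | cons z l' =>
      simp only [List.cons_append, List.cons.injEq] at h3
      obtain ⟨h4, rfl⟩ := h3
      subst h4
      exact Or.inl ⟨1, by simpa using List.rotate_append_length_eq [x] (z::l')⟩
  | 2 =>
    have hr : (x::y::x::l).rotate 2 = x::(l++[x,y]) := by
      simpa using List.rotate_append_length_eq [x,y] (x::l)
    rw [hr] at h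
    simp only [List.cons.injEq] at h
    obtain ⟨h1, h2⟩ := h
    subst h1
    cases l with
    | nil =>
      simp only [List.nil_append, List.cons.injEq] at h2
      obtain ⟨h3, h4, rfl⟩ := h2
      subst h3; subst h4
      exact Or.inl (List.IsRotated.refl _)
    | cons z l' =>
      cases l' with
      | nil =>
        simp only [List.cons_append, List.nil_append, List.cons.injEq] at h2
        obtain ⟨h3, h4, rfl⟩ := h2
        subst h3
        exact Or.inr ⟨[], [], Or.inr ⟨x, z, rfl, rfl⟩, Or.inr ⟨x, y, rfl, rfl⟩,
          List.IsRotated.refl _⟩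
      | cons z' l'' =>
        simp only [List.cons_append, List.cons.injEq] at h2
        obtain ⟨h3, h4, rfl⟩ := h2
        subst h3; subst h4
        refine Or.inr ⟨z'::l'', z'::l'', Or.inl ⟨0, z', z, l'', by simp, rfl⟩,
          Or.inl ⟨l''.length + 1, z', y, l'', ?_, rfl⟩, List.IsRotated.refl _⟩
        simpa using List.rotate_append_length_eq (z'::l'') [z', y]
  | (j'+3) =>
    have hj' : j' < l.length := by simp at hj; omega
    obtain ⟨t, d, rfl, ht, hd0⟩ : ∃ t d : List V, l = t ++ d ∧ t.length = j' ∧ d ≠ [] := by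
      refine ⟨l.take j', l.drop j', (List.take_append_drop j' l).symm, ?_, ?_⟩
      · rw [List.length_take]; omega
      · intro hh
        have := congrArg List.length hh
        simp at this; omega
    have hr : (x::y::x::(t++d)).rotate (j'+3) = d ++ (x::y::x::t) := by
      have := List.rotate_append_length_eq (x::y::x::t) d
      simp only [List.length_cons, ht] at this
      simpa using this
    rw [hr] at h
    rcases d with _ | ⟨p, d'⟩
    · exact absurd rfl hd0
    rcases d' with _ | ⟨q, d''⟩
    · -- d = [p] : results are rotations of each other
      simp only [List.cons_append, List.nil_append, List.cons.injEq] at h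
      obtain ⟨h1, h2, h3, rfl⟩ := h
      subst h1; subst h2; subst h3
      exact Or.inl ⟨t.length + 1, by simpa using List.rotate_append_length_eq (x::t) [y]⟩
    rcases d'' with _ | ⟨r, d₃⟩
    · -- d = [p,q]
      simp only [List.cons_append, List.nil_append, List.cons.injEq] at h
      obtain ⟨h1, h2, h3, rfl⟩ := h
      subst h1; subst h2; subst h3
      refine Or.inr ⟨x::t, x::t,
        Or.inl ⟨t.length + 1, x, q, t, ?_, rfl⟩,
        Or.inl ⟨0, x, y, t, by simp, rfl⟩, List.IsRotated.refl _⟩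
      simpa using List.rotate_append_length_eq (x::t) [x, q]
    · -- d = p::q::r::d₃ with r = p
      simp only [List.cons_append, List.cons.injEq] at h
      obtain ⟨h1, h2, h3, rfl⟩ := h
      subst h1; subst h2; subst h3
      refine Or.inr ⟨r::(d₃ ++ x::t), x::(t ++ r::d₃),
        Or.inl ⟨t.length + 1, r, q, d₃ ++ x::t, ?_, rfl⟩,
        Or.inl ⟨d₃.length + 1, x, y, t ++ r::d₃, ?_, rfl⟩,
        ⟨d₃.length + 1, ?_⟩⟩
      · simpa using List.rotate_append_length_eq (x::t) (r::q::r::d₃)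
      · simpa using List.rotate_append_length_eq (r::d₃) (x::y::x::t)
      · simpa using List.rotate_append_length_eq (r::d₃) (x::t)

end Retract

namespace Retract

variable {V : Type*}

def CycReduced' (w : List V) : Prop := ∀ w', ¬ CycStep w w'

lemma diamond {w a b : List V} (ha : CycStep w a) (hb : CycStep w b) :
    a ~r b ∨ ∃ c₁ c₂, CycStep a c₁ ∧ CycStep b c₂ ∧ c₁ ~r c₂ := by
  rcases ha with ⟨n, x, y, l, hn, rfl⟩ | ⟨x, y, rfl, rfl⟩
  · rcases hb with ⟨m, u, v, k, hm, rfl⟩ | ⟨u, v, hw, rfl⟩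
    · obtain ⟨k', hk'⟩ := rot_exists w n m
      rw [hn] at hk'
      rw [← hk'] at hm
      have hL : 0 < (x::y::x::l).length := by simp
      have hm' : (x::y::x::l).rotate (k' % (x::y::x::l).length) = u::v::u::k := by
        rw [List.rotate_mod]; exact hm
      exact diamond_aux x y u v l k _ (Nat.mod_lt _ hL) hm'
    · exfalso
      have := congrArg List.length hn
      simp [hw] at this
  · rcases hb with ⟨m, u, v, k, hm, rfl⟩ | ⟨u, v, hw, rfl⟩
    · exfalso
      have := congrArg List.length hm
      simp at this
    · exact Or.inl (List.IsRotated.refl _)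

/-- The induced step relation on cyclic words. -/
def SQ (c c' : Quotient (List.IsRotated.setoid V)) : Prop :=
  ∃ w a : List V, c = Quotient.mk _ w ∧ c' = Quotient.mk _ a ∧ CycStep w a

lemma sq_diamond (c a b : Quotient (List.IsRotated.setoid V))
    (ha : SQ c a) (hb : SQ c b) :
    ∃ d, Relation.ReflGen SQ a d ∧ Relation.ReflTransGen SQ b d := by
  obtain ⟨w₁, a₁, rfl, rfl, hs₁⟩ := ha
  obtain ⟨w₂, a₂, he, rfl, hs₂⟩ := hb
  have hrot : w₁ ~r w₂ := Quotient.exact he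
  have hs₂' : CycStep w₁ a₂ := step_of_isRotated hrot hs₂
  rcases diamond hs₁ hs₂' with hab | ⟨c₁, c₂, hc₁, hc₂, hcc⟩
  · have hq : Quotient.mk (List.IsRotated.setoid V) a₁ = Quotient.mk _ a₂ :=
      Quotient.sound hab
    exact ⟨Quotient.mk _ a₁, Relation.ReflGen.refl, by rw [hq]⟩
  · have hq : Quotient.mk (List.IsRotated.setoid V) c₁ = Quotient.mk _ c₂ :=
      Quotient.sound hcc
    exact ⟨Quotient.mk _ c₁, Relation.ReflGen.single ⟨a₁, c₁, rfl, rfl, hc₁⟩,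
      Relation.ReflTransGen.single ⟨a₂, c₂, rfl, hq, hc₂⟩⟩

lemma sq_reduced {r : List V} (hr : CycReduced' r) (d : Quotient (List.IsRotated.setoid V)) :
    ¬ SQ (Quotient.mk _ r) d := by
  rintro ⟨w', a, he, -, hs⟩
  exact hr a (step_of_isRotated (Quotient.exact he) hs)

lemma retract_unique {w r₁ r₂ : List V}
    (h₁ : Relation.ReflTransGen CycStep w r₁) (h₂ : Relation.ReflTransGen CycStep w r₂)
    (hr₁ : CycReduced' r₁) (hr₂ : CycReduced' r₂) : ∃ n, r₂ = r₁.rotate n := by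
  have l₁ : Relation.ReflTransGen SQ (Quotient.mk _ w) (Quotient.mk _ r₁) :=
    h₁.lift (Quotient.mk _) (fun a b h => ⟨a, b, rfl, rfl, h⟩)
  have l₂ : Relation.ReflTransGen SQ (Quotient.mk _ w) (Quotient.mk _ r₂) :=
    h₂.lift (Quotient.mk _) (fun a b h => ⟨a, b, rfl, rfl, h⟩)
  obtain ⟨d, hd₁, hd₂⟩ := Relation.church_rosser sq_diamond l₁ l₂
  have e₁ : Quotient.mk _ r₁ = d := by
    rcases (Relation.reflTransGen_iff_eq (sq_reduced hr₁)).mp hd₁ with h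
    exact h.symm
  have e₂ : Quotient.mk _ r₂ = d := by
    rcases (Relation.reflTransGen_iff_eq (sq_reduced hr₂)).mp hd₂ with h
    exact h.symm
  have : r₁ ~r r₂ := Quotient.exact (e₁.trans e₂.symm)
  obtain ⟨n, hn⟩ := this
  exact ⟨n, hn.symm⟩

end Retract


/-- The topological retract of a closed walk is unique (as a cyclic sequence, i.e. up to
rotation), independent of the choice and order of one-step retractions. -/
theorem closed_walk_retract_unique {V : Type*} (G : SimpleGraph V) (w r₁ r₂ : List V)
    (hw : IsClosedWalk G w)
    (h₁ : Relation.ReflTransGen CycStep w r₁) (h₂ : Relation.ReflTransGen CycStep w r₂)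
    (hr₁ : CycReduced r₁) (hr₂ : CycReduced r₂) : ∃ n, r₂ = r₁.rotate n :=
  Retract.retract_unique h₁ h₂ hr₁ hr₂
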